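/- Let G be a complete graph on n vertices with edges coloured from {1,2,3} such that every vertex w has |A_w| = 2, and suppose at least two of the classes V_1, V_2, V_3 (where w ∈ V_i iff i ∉ A_w) are nonempty. Then there exist a colour c and a set of at most 3 vertices that strongly c-dominates at least 2n/3 of the vertices. -/
import Mathlib


/-- The set of colours appearing on edges incident to `w`. -/
def colourSet {V : Type*} (col : V → V → ℕ) (w : V) : Set ℕ :=
  {c | ∃ u, u ≠ w ∧ col w u = c}

/-- if every vertex sees exactly two colours and at least two of
the classes `V_1, V_2, V_3` are nonempty, there are a colour `c` and a set of
at most 3 vertices strongly `c`-dominating at least `2n/3` vertices. -/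
theorem stmt_3 {V : Type*} [Fintype V] [DecidableEq V]
    (n : ℕ) (hn : Fintype.card V = n)
    (col : V → V → ℕ) (hsym : ∀ x y, col x y = col y x)
    (hcol : ∀ x y : V, x ≠ y → col x y ∈ ({1, 2, 3} : Set ℕ))
    (h2 : ∀ w : V, (colourSet col w).ncard = 2)
    (hne : ∃ i ∈ ({1, 2, 3} : Set ℕ), ∃ j ∈ ({1, 2, 3} : Set ℕ), i ≠ j ∧
      {w : V | i ∉ colourSet col w}.Nonempty ∧
      {w : V | j ∉ colourSet col w}.Nonempty) :
    ∃ c : ℕ, ∃ S : Finset V, S.card ≤ 3 ∧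
      2 * n ≤ 3 * {b : V | ∃ a ∈ S, a ≠ b ∧ col a b = c}.ncard := by
  classical
  have hsub : ∀ w : V, colourSet col w ⊆ ({1,2,3} : Set ℕ) := by
    intro w c hc
    obtain ⟨u, hu, hcu⟩ := hc
    have := hcol w u (Ne.symm hu)
    rwa [hcu] at this
  have hmem123 : ∀ {c : ℕ}, c ∈ ({1,2,3} : Set ℕ) → c = 1 ∨ c = 2 ∨ c = 3 := by
    intro c hc; simpa using hc
  -- no vertex misses two colours
  have hnotboth : ∀ (w : V) (p q : ℕ), p ∈ ({1,2,3}:Set ℕ) → q ∈ ({1,2,3}:Set ℕ) →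
      p ≠ q → p ∉ colourSet col w → q ∉ colourSet col w → False := by
    intro w p q hp hq hpq hpw hqw
    have hp3 := hmem123 hp
    have hq3 := hmem123 hq
    have hsubr : colourSet col w ⊆ {6 - p - q} := by
      intro c hc
      have hc3 := hmem123 (hsub w hc)
      have hcp : c ≠ p := fun h => hpw (h ▸ hc)
      have hcq : c ≠ q := fun h => hqw (h ▸ hc)
      simp only [Set.mem_singleton_iff]
      omega
    have hle := Set.ncard_le_ncard hsubr (Set.finite_singleton _)
    rw [h2 w, Set.ncard_singleton] at hle
    omega
  -- every vertex misses at least one colour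
  have hone : ∀ w : V, 1 ∉ colourSet col w ∨ 2 ∉ colourSet col w ∨ 3 ∉ colourSet col w := by
    intro w
    by_contra h
    push_neg at h
    obtain ⟨ha, hb, hc⟩ := h
    have hsup : ({1,2,3} : Set ℕ) ⊆ colourSet col w := by
      intro c hcm; rcases hmem123 hcm with rfl|rfl|rfl <;> assumption
    have heq : colourSet col w = ({1,2,3}:Set ℕ) := Set.Subset.antisymm (hsub w) hsup
    have h2w := h2 w
    rw [heq] at h2w
    rw [show ({1,2,3}:Set ℕ) = (({1,2,3}:Finset ℕ) : Set ℕ) by simp,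
      Set.ncard_coe_finset] at h2w
    simp at h2w
  -- the colour classes
  set Vc : ℕ → Finset V := fun c => Finset.univ.filter (fun w => c ∉ colourSet col w) with hVcdef
  have hVc : ∀ c w, w ∈ Vc c ↔ c ∉ colourSet col w := by
    intro c w; simp [hVcdef]
  have hdisj : ∀ p q, p ∈ ({1,2,3}:Set ℕ) → q ∈ ({1,2,3}:Set ℕ) → p ≠ q →
      Disjoint (Vc p) (Vc q) := by
    intro p q hp hq hpq
    rw [Finset.disjoint_left]
    intro w hwp hwq
    exact hnotboth w p q hp hq hpq ((hVc p w).1 hwp) ((hVc q w).1 hwq)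
  have hcover : Vc 1 ∪ Vc 2 ∪ Vc 3 = Finset.univ := by
    apply Finset.eq_univ_of_forall
    intro w
    simp only [Finset.mem_union, hVc]
    rcases hone w with h|h|h
    · exact Or.inl (Or.inl h)
    · exact Or.inl (Or.inr h)
    · exact Or.inr h
  have hsum : (Vc 1).card + (Vc 2).card + (Vc 3).card = n := by
    have d12 : Disjoint (Vc 1) (Vc 2) := hdisj 1 2 (by simp) (by simp) (by decide)
    have d3 : Disjoint (Vc 1 ∪ Vc 2) (Vc 3) := by
      rw [Finset.disjoint_union_left]
      exact ⟨hdisj 1 3 (by simp) (by simp) (by decide),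
        hdisj 2 3 (by simp) (by simp) (by decide)⟩
    have := Finset.card_union_of_disjoint d3
    rw [hcover, Finset.card_union_of_disjoint d12, Finset.card_univ, hn] at this
    omega
  -- edge colours between classes
  have hedge : ∀ (x y : V) (p q : ℕ), p ∈ ({1,2,3}:Set ℕ) → q ∈ ({1,2,3}:Set ℕ) → p ≠ q →
      x ∈ Vc p → y ∈ Vc q → col x y = 6 - p - q := by
    intro x y p q hp hq hpq hx hy
    have hxy : x ≠ y := by
      rintro rfl
      exact hnotboth x p q hp hq hpq ((hVc p x).1 hx) ((hVc q x).1 hy)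
    have h3 := hmem123 (hcol x y hxy)
    have hcp : col x y ≠ p := by
      intro h
      exact (hVc p x).1 hx ⟨y, hxy.symm, h⟩
    have hcq : col x y ≠ q := by
      intro h
      exact (hVc q y).1 hy ⟨x, hxy, by rw [hsym y x]; exact h⟩
    have hp3 := hmem123 hp
    have hq3 := hmem123 hq
    omega
  -- key lemma
  have key : ∀ p q r : ℕ, p ∈ ({1,2,3}:Set ℕ) → q ∈ ({1,2,3}:Set ℕ) →
      r ∈ ({1,2,3}:Set ℕ) → p ≠ q → p ≠ r → q ≠ r →
      (Vc p).Nonempty → (Vc q).Nonempty → 3 * (Vc r).card ≤ n →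
      ∃ c : ℕ, ∃ S : Finset V, S.card ≤ 3 ∧
        2 * n ≤ 3 * {b : V | ∃ a ∈ S, a ≠ b ∧ col a b = c}.ncard := by
    rintro p q r hp hq hr hpq hpr hqr ⟨u, hu⟩ ⟨v, hv⟩ hcard
    have hp3 := hmem123 hp
    have hq3 := hmem123 hq
    refine ⟨6 - p - q, {u, v}, ?_, ?_⟩
    · exact le_trans (Finset.card_insert_le _ _) (by simp)
    · have hsubD : ((Vc p ∪ Vc q : Finset V) : Set V) ⊆
          {b : V | ∃ a ∈ ({u,v}:Finset V), a ≠ b ∧ col a b = 6 - p - q} := by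
        intro b hb
        simp only [Finset.coe_union, Set.mem_union, Finset.mem_coe] at hb
        rcases hb with hb | hb
        · refine ⟨v, by simp, ?_, ?_⟩
          · intro h
            subst h
            exact hnotboth v p q hp hq hpq ((hVc p v).1 hb) ((hVc q v).1 hv)
          · have := hedge v b q p hq hp (Ne.symm hpq) hv hb
            omega
        · refine ⟨u, by simp, ?_, ?_⟩
          · intro h
            subst h
            exact hnotboth u p q hp hq hpq ((hVc p u).1 hu) ((hVc q u).1 hb)
          · exact hedge u b p q hp hq hpq hu hb
      have h1 : ((Vc p ∪ Vc q : Finset V) : Set V).ncard ≤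
          {b : V | ∃ a ∈ ({u,v}:Finset V), a ≠ b ∧ col a b = 6 - p - q}.ncard :=
        Set.ncard_le_ncard hsubD (Set.toFinite _)
      rw [Set.ncard_coe_finset,
        Finset.card_union_of_disjoint (hdisj p q hp hq hpq)] at h1
      have hsum' : (Vc p).card + (Vc q).card + (Vc r).card = n := by
        rcases hp3 with rfl|rfl|rfl <;> rcases hq3 with rfl|rfl|rfl <;>
          rcases hmem123 hr with rfl|rfl|rfl <;> omega
      omega
  -- find the right permutation
  obtain ⟨i, hi, j, hj, hij, ⟨wi, hwi⟩, ⟨wj, hwj⟩⟩ := hne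
  have hposi : 0 < (Vc i).card := Finset.card_pos.2 ⟨wi, (hVc i wi).2 hwi⟩
  have hposj : 0 < (Vc j).card := Finset.card_pos.2 ⟨wj, (hVc j wj).2 hwj⟩
  have hpos2 : (0 < (Vc 1).card ∧ 0 < (Vc 2).card) ∨
      (0 < (Vc 1).card ∧ 0 < (Vc 3).card) ∨
      (0 < (Vc 2).card ∧ 0 < (Vc 3).card) := by
    rcases hmem123 hi with rfl|rfl|rfl <;> rcases hmem123 hj with rfl|rfl|rfl <;> omega
  have hchoice : (0 < (Vc 2).card ∧ 0 < (Vc 3).card ∧ 3 * (Vc 1).card ≤ n) ∨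
      (0 < (Vc 1).card ∧ 0 < (Vc 3).card ∧ 3 * (Vc 2).card ≤ n) ∨
      (0 < (Vc 1).card ∧ 0 < (Vc 2).card ∧ 3 * (Vc 3).card ≤ n) := by
    omega
  rcases hchoice with ⟨ha, hb, hc⟩ | ⟨ha, hb, hc⟩ | ⟨ha, hb, hc⟩
  · exact key 2 3 1 (by simp) (by simp) (by simp) (by decide) (by decide) (by decide)
      (Finset.card_pos.1 ha) (Finset.card_pos.1 hb) hc
  · exact key 1 3 2 (by simp) (by simp) (by simp) (by decide) (by decide) (by decide)
      (Finset.card_pos.1 ha) (Finset.card_pos.1 hb) hc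
  · exact key 1 2 3 (by simp) (by simp) (by simp) (by decide) (by decide) (by decide)
      (Finset.card_pos.1 ha) (Finset.card_pos.1 hb) hc
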